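/- Let C be an arrovian voting system on at least three alternatives. If a subset J ⊆ I is strongly decisive, then the voters in the complement I \ J have no influence on the outcome: for any two profiles P, P' that agree on J (i.e., P_j = P'_j for all j ∈ J), C(P) = C(P'). -/
import Mathlib


variable {A I : Type*}

/-- A partial preorder: a reflexive and transitive binary relation. -/
def IsPPO (P : A → A → Prop) : Prop := Reflexive P ∧ Transitive P

/-- A linear (total) preorder: reflexive, transitive and complete. -/
def IsLPO (P : A → A → Prop) : Prop := Reflexive P ∧ Transitive P ∧ ∀ a b, P a b ∨ P b a

/-- A profile of partial preorders. -/
def IsPPOProfile (P : I → A → A → Prop) : Prop := ∀ i, IsPPO (P i)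

/-- A profile of linear (total) preorders. -/
def IsLPOProfile (P : I → A → A → Prop) : Prop := ∀ i, IsLPO (P i)

/-- Strict preference. -/
def StrictPref (P : A → A → Prop) (a b : A) : Prop := P a b ∧ ¬ P b a

/-- Indifference. -/
def Indiff (P : A → A → Prop) (a b : A) : Prop := P a b ∧ P b a

/-- The set `A` contains at least three distinct alternatives. -/
def ThreeAlts (A : Type*) : Prop := ∃ a b c : A, a ≠ b ∧ b ≠ c ∧ a ≠ c

/-- Unanimity. -/
def Unanimity (C : (I → A → A → Prop) → A → A → Prop) : Prop :=
  ∀ P, IsPPOProfile P → ∀ a b : A, (∀ i, P i a b) → C P a b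

/-- Independence of irrelevant alternatives. -/
def IIA (C : (I → A → A → Prop) → A → A → Prop) : Prop :=
  ∀ P P' : I → A → A → Prop, IsPPOProfile P → IsPPOProfile P' → ∀ a b : A,
    {i | P i a b} = {i | P' i a b} → {i | P i b a} = {i | P' i b a} →
    (C P a b ↔ C P' a b)

/-- Neutrality: `C (ρ*P) = ρ*(C P)` for every permutation `ρ` of the alternatives. -/
def Neutrality (C : (I → A → A → Prop) → A → A → Prop) : Prop :=
  ∀ (ρ : Equiv.Perm A) (P : I → A → A → Prop), IsPPOProfile P →
    ∀ x y : A, C (fun i a b => P i (ρ.symm a) (ρ.symm b)) x y ↔ C P (ρ.symm x) (ρ.symm y)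

/-- Monotonicity. -/
def Monotonicity (C : (I → A → A → Prop) → A → A → Prop) : Prop :=
  ∀ P P' : I → A → A → Prop, IsPPOProfile P → IsPPOProfile P' → ∀ a b : A,
    {i | P i a b} ⊆ {i | P' i a b} → {i | P' i b a} ⊆ {i | P i b a} →
    C P a b → C P' a b

/-- `J` is a decisive set: unanimous strict preference on `J` forces weak aggregate preference. -/
def Decisive (C : (I → A → A → Prop) → A → A → Prop) (J : Set I) : Prop :=
  ∀ P, IsPPOProfile P → ∀ a b : A, (∀ j ∈ J, StrictPref (P j) a b) → C P a b

/-- `J` is a strongly decisive set: unanimous weak preference on `J` forces weak aggregate preference. -/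
def SDecisive (C : (I → A → A → Prop) → A → A → Prop) (J : Set I) : Prop :=
  ∀ P, IsPPOProfile P → ∀ a b : A, (∀ j ∈ J, P j a b) → C P a b

/-- Auxiliary relation for voters outside `J`. -/
def Rout (Pab Pba Qab Qba : Prop) (a b c : A) (x y : A) : Prop :=
  x = y ∨ (x = a ∧ y = b ∧ Pab) ∨ (x = b ∧ y = a ∧ Pba) ∨
    (x = c ∧ y = b ∧ Qab) ∨ (x = b ∧ y = c ∧ Qba) ∨
    (x = a ∧ y = c ∧ Pab ∧ Qba) ∨ (x = c ∧ y = a ∧ Qab ∧ Pba)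

set_option maxHeartbeats 1600000 in
lemma Rout_isPPO {Pab Pba Qab Qba : Prop} {a b c : A}
    (hab : a ≠ b) (hbc : b ≠ c) (hac : a ≠ c) :
    IsPPO (Rout Pab Pba Qab Qba a b c) := by
  constructor
  · intro x; left; rfl
  · intro x y z hxy hyz
    unfold Rout at *
    obtain rfl | ⟨e1, e2, h1⟩ | ⟨e1, e2, h1⟩ | ⟨e1, e2, h1⟩ |
        ⟨e1, e2, h1⟩ | ⟨e1, e2, h1⟩ | ⟨e1, e2, h1⟩ := hxy <;>
      obtain rfl | ⟨f1, f2, h2⟩ | ⟨f1, f2, h2⟩ | ⟨f1, f2, h2⟩ |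
          ⟨f1, f2, h2⟩ | ⟨f1, f2, h2⟩ | ⟨f1, f2, h2⟩ := hyz <;>
        subst_vars <;> tauto

lemma Rout_ab {Pab Pba Qab Qba : Prop} {a b c : A}
    (hab : a ≠ b) (hbc : b ≠ c) (hac : a ≠ c) :
    Rout Pab Pba Qab Qba a b c a b ↔ Pab := by
  unfold Rout; simp [hab, hbc, hac, hab.symm, hbc.symm, hac.symm]

lemma Rout_ba {Pab Pba Qab Qba : Prop} {a b c : A}
    (hab : a ≠ b) (hbc : b ≠ c) (hac : a ≠ c) :
    Rout Pab Pba Qab Qba a b c b a ↔ Pba := by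
  unfold Rout; simp [hab, hbc, hac, hab.symm, hbc.symm, hac.symm]

lemma Rout_cb {Pab Pba Qab Qba : Prop} {a b c : A}
    (hab : a ≠ b) (hbc : b ≠ c) (hac : a ≠ c) :
    Rout Pab Pba Qab Qba a b c c b ↔ Qab := by
  unfold Rout; simp [hab, hbc, hac, hab.symm, hbc.symm, hac.symm]

lemma Rout_bc {Pab Pba Qab Qba : Prop} {a b c : A}
    (hab : a ≠ b) (hbc : b ≠ c) (hac : a ≠ c) :
    Rout Pab Pba Qab Qba a b c b c ↔ Qba := by
  unfold Rout; simp [hab, hbc, hac, hab.symm, hbc.symm, hac.symm]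

lemma pullback_isPPO {P : A → A → Prop} (hP : IsPPO P) (σ : A → A) :
    IsPPO (fun x y => P (σ x) (σ y)) :=
  ⟨fun x => hP.1 (σ x), fun _ _ _ h1 h2 => hP.2 h1 h2⟩

lemma exclusion_aux [Fintype I] (C : (I → A → A → Prop) → A → A → Prop)
    (hC : ∀ P, IsPPOProfile P → IsPPO (C P))
    (hU : Unanimity C) (hIIA : IIA C)
    (J : Set I) (hJ : SDecisive C J)
    (P P' : I → A → A → Prop) (hP : IsPPOProfile P) (hP' : IsPPOProfile P')
    (hagree : ∀ j ∈ J, P j = P' j)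
    {a b c : A} (hab : a ≠ b) (hbc : b ≠ c) (hac : a ≠ c)
    (hPab : C P a b) : C P' a b := by
  classical
  set σ : A → A := fun x => if x = c then a else x with hσ
  have hσa : σ a = a := by simp [hσ, hac]
  have hσb : σ b = b := by simp [hσ, hbc]
  have hσc : σ c = a := by simp [hσ]
  set Q : I → A → A → Prop := fun i x y =>
    if i ∈ J then P i (σ x) (σ y)
    else Rout (P i a b) (P i b a) (P' i a b) (P' i b a) a b c x y with hQdef
  set Q'' : I → A → A → Prop := fun i x y => P' i (σ x) (σ y) with hQ''def
  have hQ : IsPPOProfile Q := by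
    intro i
    by_cases hi : i ∈ J
    · simpa [hQdef, hi] using pullback_isPPO (hP i) σ
    · simpa [hQdef, hi] using Rout_isPPO (Pab := P i a b) (Pba := P i b a)
        (Qab := P' i a b) (Qba := P' i b a) hab hbc hac
  have hQ'' : IsPPOProfile Q'' := fun i => pullback_isPPO (hP' i) σ
  -- Step 1: C Q a b
  have hQab : C Q a b := by
    have h1 : {i | P i a b} = {i | Q i a b} := by
      ext i; by_cases hi : i ∈ J <;>
        simp [hQdef, hi, hσa, hσb, Rout_ab hab hbc hac]
    have h2 : {i | P i b a} = {i | Q i b a} := by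
      ext i; by_cases hi : i ∈ J <;>
        simp [hQdef, hi, hσa, hσb, Rout_ba hab hbc hac]
    exact (hIIA P Q hP hQ a b h1 h2).mp hPab
  -- Step 2: C Q c a by strong decisiveness, then C Q c b by transitivity
  have hQca : C Q c a := by
    apply hJ Q hQ c a
    intro j hj
    simp only [hQdef, if_pos hj, hσa, hσc]
    exact (hP j).1 a
  have hQcb : C Q c b := (hC Q hQ).2 hQca hQab
  -- Step 3: transfer to Q'' via IIA on the pair (c, b)
  have hQ''cb : C Q'' c b := by
    have h1 : {i | Q i c b} = {i | Q'' i c b} := by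
      ext i; by_cases hi : i ∈ J
      · simp [hQdef, hQ''def, hi, hσb, hσc, hagree i hi]
      · simp [hQdef, hQ''def, hi, hσb, hσc, Rout_cb hab hbc hac]
    have h2 : {i | Q i b c} = {i | Q'' i b c} := by
      ext i; by_cases hi : i ∈ J
      · simp [hQdef, hQ''def, hi, hσb, hσc, hagree i hi]
      · simp [hQdef, hQ''def, hi, hσb, hσc, Rout_bc hab hbc hac]
    exact (hIIA Q Q'' hQ hQ'' c b h1 h2).mp hQcb
  -- Step 4: C Q'' a c by unanimity, then C Q'' a b by transitivity
  have hQ''ac : C Q'' a c := by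
    apply hU Q'' hQ'' a c
    intro i
    simp only [hQ''def, hσa, hσc]
    exact (hP' i).1 a
  have hQ''ab : C Q'' a b := (hC Q'' hQ'').2 hQ''ac hQ''cb
  -- Step 5: back to P' via IIA on (a, b)
  have h1 : {i | Q'' i a b} = {i | P' i a b} := by
    ext i; simp [hQ''def, hσa, hσb]
  have h2 : {i | Q'' i b a} = {i | P' i b a} := by
    ext i; simp [hQ''def, hσa, hσb]
  exact (hIIA Q'' P' hQ'' hP' a b h1 h2).mp hQ''ab

theorem exclusion_property [Fintype I] (C : (I → A → A → Prop) → A → A → Prop)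
    (hA : ThreeAlts A)
    (hC : ∀ P, IsPPOProfile P → IsPPO (C P))
    (hU : Unanimity C) (hIIA : IIA C)
    (J : Set I) (hJ : SDecisive C J) :
    ∀ P P' : I → A → A → Prop, IsPPOProfile P → IsPPOProfile P' →
      (∀ j ∈ J, P j = P' j) → C P = C P' := by
  intro P P' hP hP' hagree
  funext a b
  apply propext
  by_cases hab : a = b
  · subst hab
    exact iff_of_true ((hC P hP).1 a) ((hC P' hP').1 a)
  · -- choose c different from a and b
    obtain ⟨x, y, z, hxy, hyz, hxz⟩ := hA
    obtain ⟨c, hca, hcb⟩ : ∃ c : A, c ≠ a ∧ c ≠ b := by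
      by_cases hxa : x = a
      · by_cases hyb : y = b
        · exact ⟨z, by rintro rfl; exact hxz hxa, by rintro rfl; exact hyz hyb⟩
        · exact ⟨y, by rintro rfl; exact hxy hxa, hyb⟩
      · by_cases hxb : x = b
        · by_cases hya : y = a
          · exact ⟨z, by rintro rfl; exact hyz hya, by rintro rfl; exact hxz hxb⟩
          · exact ⟨y, hya, by rintro rfl; exact hxy hxb⟩
        · exact ⟨x, hxa, hxb⟩
    have hagree' : ∀ j ∈ J, P' j = P j := fun j hj => (hagree j hj).symm
    constructor
    · exact exclusion_aux C hC hU hIIA J hJ P P' hP hP' hagree hab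
        (fun h => hcb h.symm) (fun h => hca h.symm)
    · exact exclusion_aux C hC hU hIIA J hJ P' P hP' hP hagree' hab
        (fun h => hcb h.symm) (fun h => hca h.symm)
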